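/- Under the SOBA-type recursion below, if Σ_{t=1}^T n_t m_t ≥ 0, then for every U ∈ ℝ^N: Σ_{t=1}^T n_t (−2⟨U, g_t⟩ − ⟨U, z_t⟩²) ≤ a ‖U‖² + Σ_{t=1}^T n_t · g_tᵀ A_t^{−1} g_t. -/

import Mathlib

open Finset Matrix

lemma vecMulVec_mulVec' {N : ℕ} (z x : Fin N → ℝ) :
    Matrix.vecMulVec z z *ᵥ x = (z ⬝ᵥ x) • z := by
  ext i
  simp [Matrix.vecMulVec, Matrix.mulVec, dotProduct, Finset.mul_sum, mul_comm, mul_assoc,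
    mul_left_comm]

lemma herm_dot {N : ℕ} {M : Matrix (Fin N) (Fin N) ℝ} (hM : M.IsHermitian) (u v : Fin N → ℝ) :
    u ⬝ᵥ (M *ᵥ v) = v ⬝ᵥ (M *ᵥ u) := by
  have hsymm : ∀ i j, M j i = M i j := by
    intro i j
    have := congrFun (congrFun hM i) j
    simpa [Matrix.conjTranspose_apply] using this
  simp only [dotProduct, Matrix.mulVec, Finset.mul_sum]
  rw [Finset.sum_comm]
  refine Finset.sum_congr rfl fun j _ => Finset.sum_congr rfl fun i _ => ?_
  rw [hsymm i j]; ring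

lemma posSemidef_vecMulVec' {N : ℕ} (z : Fin N → ℝ) :
    (Matrix.vecMulVec z z).PosSemidef := by
  refine posSemidef_iff_dotProduct_mulVec.mpr ⟨?_, ?_⟩
  · ext i j
    simp [Matrix.conjTranspose_apply, Matrix.vecMulVec, mul_comm]
  · intro x
    rw [vecMulVec_mulVec']
    simp only [dotProduct_smul, smul_eq_mul, star_trivial]
    rw [dotProduct_comm]
    exact mul_self_nonneg _

lemma phi_step {N : ℕ} (Amat : Matrix (Fin N) (Fin N) ℝ) (hA : Amat.PosDef)
    (z θv : Fin N → ℝ) (αv : ℝ) :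
    (θv - αv • z) ⬝ᵥ ((Amat + Matrix.vecMulVec z z)⁻¹ *ᵥ (θv - αv • z))
      = θv ⬝ᵥ (Amat⁻¹ *ᵥ θv)
        - ((((Amat⁻¹ *ᵥ θv) ⬝ᵥ z) ^ 2 + 2 * ((Amat⁻¹ *ᵥ θv) ⬝ᵥ (αv • z)))
            / (1 + z ⬝ᵥ (Amat⁻¹ *ᵥ z)))
        + (αv • z) ⬝ᵥ ((Amat + Matrix.vecMulVec z z)⁻¹ *ᵥ (αv • z)) := by
  set B := Amat + Matrix.vecMulVec z z with hBdef
  set p : Fin N → ℝ := Amat⁻¹ *ᵥ z with hp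
  set q : Fin N → ℝ := Amat⁻¹ *ᵥ θv with hq
  set s : ℝ := z ⬝ᵥ p with hs
  set u : ℝ := z ⬝ᵥ q with hu
  have hAdet : IsUnit Amat.det := hA.det_pos.ne'.isUnit
  have hBpos : B.PosDef := hA.add_posSemidef (posSemidef_vecMulVec' z)
  have hBdet : IsUnit B.det := hBpos.det_pos.ne'.isUnit
  have hAp : Amat *ᵥ p = z := by
    rw [hp, Matrix.mulVec_mulVec, Matrix.mul_nonsing_inv _ hAdet, Matrix.one_mulVec]
  have hAq : Amat *ᵥ q = θv := by
    rw [hq, Matrix.mulVec_mulVec, Matrix.mul_nonsing_inv _ hAdet, Matrix.one_mulVec]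
  have hs0 : 0 ≤ s := by
    have := hA.inv.posSemidef.dotProduct_mulVec_nonneg z
    simpa [hs, hp, star_trivial] using this
  have hs1 : (1 : ℝ) + s ≠ 0 := by positivity
  set c : ℝ := (u + αv) / (1 + s) with hc
  have hcs : c * (1 + s) = u + αv := by rw [hc]; exact div_mul_cancel₀ _ hs1
  -- B⁻¹ applied to θv - αv • z
  have hBx : B *ᵥ (q - c • p) = θv - αv • z := by
    have h2 : z ⬝ᵥ (q - c • p) = u - c * s := by
      simp [dotProduct_sub, dotProduct_smul, smul_eq_mul, hu, hs]
    rw [hBdef, Matrix.add_mulVec, vecMulVec_mulVec', h2, Matrix.mulVec_sub,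
      Matrix.mulVec_smul, hAq, hAp]
    have h4 : u - c * s - c = -αv := by
      linear_combination -hcs
    ext i
    simp only [Pi.add_apply, Pi.sub_apply, Pi.smul_apply, smul_eq_mul]
    linear_combination z i * h4
  have hBinvx : B⁻¹ *ᵥ (θv - αv • z) = q - c • p := by
    rw [← hBx, Matrix.mulVec_mulVec, Matrix.nonsing_inv_mul _ hBdet, Matrix.one_mulVec]
  -- B⁻¹ applied to z
  have hBz : B *ᵥ ((1 + s)⁻¹ • p) = z := by
    rw [hBdef, Matrix.add_mulVec, Matrix.mulVec_smul, hAp, vecMulVec_mulVec',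
      dotProduct_smul, ← hs]
    ext i
    simp only [Pi.add_apply, Pi.smul_apply, smul_eq_mul]
    field_simp
  have hBinvz : B⁻¹ *ᵥ z = (1 + s)⁻¹ • p := by
    rw [← hBz, Matrix.mulVec_mulVec, Matrix.nonsing_inv_mul _ hBdet, Matrix.one_mulVec]
  -- symmetry fact
  have hθp : θv ⬝ᵥ p = u := by
    rw [hp, herm_dot hA.isHermitian.inv θv z, ← hq, ← hu]
  -- reduce all dot products
  have hLHS : (θv - αv • z) ⬝ᵥ (B⁻¹ *ᵥ (θv - αv • z))
      = θv ⬝ᵥ q - c * u - αv * u + αv * (c * s) := by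
    rw [hBinvx]
    simp only [sub_dotProduct, smul_dotProduct, dotProduct_sub,
      dotProduct_smul, smul_eq_mul, hθp, ← hu, ← hs]
    try ring
  have hRHS2 : (αv • z) ⬝ᵥ (B⁻¹ *ᵥ (αv • z)) = αv ^ 2 * ((1 + s)⁻¹ * s) := by
    rw [Matrix.mulVec_smul, hBinvz]
    simp only [smul_dotProduct, dotProduct_smul, smul_eq_mul, ← hs]
    try ring
  have hq2 : q ⬝ᵥ z = u := by rw [dotProduct_comm]
  have hqz : q ⬝ᵥ (αv • z) = αv * u := by
    rw [dotProduct_smul, smul_eq_mul, hq2]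
  rw [hLHS, hRHS2, hq2, hqz, hc]
  field_simp
  ring

theorem soba_second_order_regret_lemma
    (N T : ℕ) (hN : 1 ≤ N) (hT : 1 ≤ T) (a : ℝ) (ha : 0 < a)
    (z : ℕ → Fin N → ℝ) (α : ℕ → ℝ)
    (n : ℕ → ℝ) (hn : ∀ t, n t = 0 ∨ n t = 1)
    (g : ℕ → Fin N → ℝ) (hg : ∀ t, g t = α t • z t)
    (A : ℕ → Matrix (Fin N) (Fin N) ℝ)
    (hA0 : A 0 = a • (1 : Matrix (Fin N) (Fin N) ℝ))
    (hA : ∀ t, A (t + 1) = A t + n t • Matrix.vecMulVec (z t) (z t))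
    (θ : ℕ → Fin N → ℝ) (hθ0 : θ 0 = 0)
    (hθ : ∀ t, θ (t + 1) = θ t - n t • g t)
    (W : ℕ → Fin N → ℝ) (hW : ∀ t, W t = (A t)⁻¹ *ᵥ θ t)
    (m : ℕ → ℝ)
    (hm : ∀ t, m t = ((W t ⬝ᵥ z t) ^ 2 + 2 * (W t ⬝ᵥ g t)) / (1 + z t ⬝ᵥ ((A t)⁻¹ *ᵥ z t)))
    (hinv : 0 ≤ ∑ t ∈ Finset.range T, n t * m t)
    (U : Fin N → ℝ) :
    ∑ t ∈ Finset.range T, n t * (-(2 * (U ⬝ᵥ g t)) - (U ⬝ᵥ z t) ^ 2)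
      ≤ a * (U ⬝ᵥ U) + ∑ t ∈ Finset.range T, n t * (g t ⬝ᵥ ((A (t + 1))⁻¹ *ᵥ g t)) := by
  -- positive definiteness of A t
  have hpos : ∀ t, (A t).PosDef := by
    intro t
    induction t with
    | zero =>
      rw [hA0]
      refine posDef_iff_dotProduct_mulVec.mpr ⟨?_, fun x hx => ?_⟩
      · ext i j
        simp [Matrix.conjTranspose_apply, Matrix.one_apply, eq_comm]
      · have h1 : (a • (1 : Matrix (Fin N) (Fin N) ℝ)) *ᵥ x = a • x := by
          rw [Matrix.smul_mulVec, Matrix.one_mulVec]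
        rw [h1]
        have h2 : (0 : ℝ) < star x ⬝ᵥ x := dotProduct_star_self_pos_iff.mpr hx
        simp only [dotProduct_smul, smul_eq_mul]
        exact mul_pos ha h2
    | succ k ih =>
      rw [hA k]
      rcases hn k with h0 | h1
      · simpa [h0] using ih
      · rw [h1, one_smul]
        exact ih.add_posSemidef (posSemidef_vecMulVec' (z k))
  -- potential step
  have hΦstep : ∀ t, θ (t + 1) ⬝ᵥ ((A (t + 1))⁻¹ *ᵥ θ (t + 1))
      = θ t ⬝ᵥ ((A t)⁻¹ *ᵥ θ t) + n t * (-(m t) + g t ⬝ᵥ ((A (t + 1))⁻¹ *ᵥ g t)) := by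
    intro t
    rcases hn t with h0 | h1
    · rw [hθ t, hA t, h0, zero_smul, zero_smul, sub_zero, add_zero, zero_mul, add_zero]
    · have hAt1 : A (t + 1) = A t + Matrix.vecMulVec (z t) (z t) := by
        rw [hA t, h1, one_smul]
      have hθt1 : θ (t + 1) = θ t - α t • z t := by rw [hθ t, h1, one_smul, hg t]
      rw [h1, one_mul, hθt1, hAt1, hg t,
        phi_step (A t) (hpos t) (z t) (θ t) (α t), hm t, hW t, hg t]
      ring
  -- potential sum
  have hΦsum : ∀ k, θ k ⬝ᵥ ((A k)⁻¹ *ᵥ θ k)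
      = ∑ t ∈ Finset.range k, n t * (-(m t) + g t ⬝ᵥ ((A (t + 1))⁻¹ *ᵥ g t)) := by
    intro k
    induction k with
    | zero => simp [hθ0]
    | succ k ih => rw [Finset.sum_range_succ, ← ih, hΦstep k]
  -- rewrite the LHS sum
  have hLHSsum : ∀ k, ∑ t ∈ Finset.range k, n t * (-(2 * (U ⬝ᵥ g t)) - (U ⬝ᵥ z t) ^ 2)
      = 2 * (θ k ⬝ᵥ U) - U ⬝ᵥ (A k *ᵥ U) + a * (U ⬝ᵥ U) := by
    intro k
    induction k with
    | zero =>
      rw [hA0, hθ0]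
      simp [Matrix.smul_mulVec, Matrix.one_mulVec, dotProduct_smul]
    | succ k ih =>
      have e1 : θ (k + 1) ⬝ᵥ U = θ k ⬝ᵥ U - n k * (U ⬝ᵥ g k) := by
        rw [hθ k, sub_dotProduct, smul_dotProduct, smul_eq_mul,
          dotProduct_comm (g k) U]
      have e2 : U ⬝ᵥ (A (k + 1) *ᵥ U) = U ⬝ᵥ (A k *ᵥ U) + n k * (U ⬝ᵥ z k) ^ 2 := by
        rw [hA k, Matrix.add_mulVec, Matrix.smul_mulVec, vecMulVec_mulVec',
          dotProduct_add, dotProduct_smul, dotProduct_smul,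
          smul_eq_mul, smul_eq_mul, dotProduct_comm (z k) U]
        ring
      rw [Finset.sum_range_succ, ih, e1, e2]
      ring
  -- quadratic minimization
  have hdet : IsUnit (A T).det := (hpos T).det_pos.ne'.isUnit
  have hquad : 2 * (θ T ⬝ᵥ U) - U ⬝ᵥ (A T *ᵥ U) ≤ θ T ⬝ᵥ ((A T)⁻¹ *ᵥ θ T) := by
    set qv : Fin N → ℝ := (A T)⁻¹ *ᵥ θ T with hqv
    have hAq : A T *ᵥ qv = θ T := by
      rw [hqv, Matrix.mulVec_mulVec, Matrix.mul_nonsing_inv _ hdet, Matrix.one_mulVec]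
    have h0 := (hpos T).posSemidef.dotProduct_mulVec_nonneg (U - qv)
    have expand : star (U - qv) ⬝ᵥ (A T *ᵥ (U - qv))
        = U ⬝ᵥ (A T *ᵥ U) - 2 * (θ T ⬝ᵥ U) + θ T ⬝ᵥ qv := by
      rw [star_trivial, Matrix.mulVec_sub, hAq, dotProduct_sub,
        sub_dotProduct, sub_dotProduct,
        herm_dot (hpos T).isHermitian qv U, hAq,
        dotProduct_comm qv (θ T), dotProduct_comm U (θ T)]
      ring
    rw [expand] at h0
    linarith
  -- split the sum
  have hsplit : ∑ t ∈ Finset.range T, n t * (-(m t) + g t ⬝ᵥ ((A (t + 1))⁻¹ *ᵥ g t))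
      = -(∑ t ∈ Finset.range T, n t * m t)
        + ∑ t ∈ Finset.range T, n t * (g t ⬝ᵥ ((A (t + 1))⁻¹ *ᵥ g t)) := by
    simp only [mul_add, mul_neg]
    rw [Finset.sum_add_distrib, Finset.sum_neg_distrib]
  have hΦT := hΦsum T
  rw [hsplit] at hΦT
  rw [hLHSsum T]
  linarith
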